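/- arXiv:1610.06915 — 3 statements merged into one kernel-verified Lean document; each statement's English description precedes it below -/
import Mathlib

section
/- Let F be a field of characteristic 2 and D a finite-dimensional central division algebra over F carrying an F-linear involution. Then u⁺_d(D) ≤ [F:F²]/deg(D), i.e. deg(D) · u⁺_d(D) ≤ [F:F²] (in ℕ ∪ {∞}). -/
noncomputable section GenQuadForm

open scoped TensorProduct

/-- An `F`-linear involution (of the first kind) on the `F`-algebra `D`. -/
def IsFInvolution (F : Type*) {D : Type*} [Field F] [Ring D] [Algebra F D]
    (θ : D → D) : Prop :=
  (∀ a b : D, θ (a + b) = θ a + θ b) ∧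
  (∀ (c : F) (a : D), θ (c • a) = c • θ a) ∧
  (∀ a b : D, θ (a * b) = θ b * θ a) ∧
  (∀ a : D, θ (θ a) = a)

/-- `Sym(D,θ)`, the set of symmetric elements. -/
def SymSet {D : Type*} (θ : D → D) : Set D := {a | θ a = a}

/-- `Alt(D,θ) = {a - θ a | a ∈ D}`, the set of alternating elements. -/
def AltSet {D : Type*} [Ring D] (θ : D → D) : Set D := {a | ∃ b : D, a = b - θ b}

/-- The right scalar multiple of a vector `x ∈ Dⁿ` by `d ∈ D`. -/
def rsmul {D : Type*} [Ring D] {n : ℕ} (x : Fin n → D) (d : D) : Fin n → D :=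
  fun i => x i * d

/-- `h` is a hermitian form on the (right) `D`-vector space `Dⁿ` with respect to the
involution `θ`: bi-additive, sesquilinear and `θ`-symmetric. (Every `n`-dimensional right
`D`-vector space is isomorphic to `Dⁿ`.) -/
def IsHermForm {D : Type*} [Ring D] (θ : D → D) (n : ℕ)
    (h : (Fin n → D) → (Fin n → D) → D) : Prop :=
  (∀ x x' y : Fin n → D, h (x + x') y = h x y + h x' y) ∧
  (∀ x y y' : Fin n → D, h x (y + y') = h x y + h x y') ∧
  (∀ (x y : Fin n → D) (d₁ d₂ : D), h (rsmul x d₁) (rsmul y d₂) = θ d₁ * h x y * d₂) ∧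
  (∀ x y : Fin n → D, h y x = θ (h x y))

/-- A hermitian form is anisotropic if `h x x = 0` only for `x = 0`. -/
def HermAnisotropic {D : Type*} [Ring D] (n : ℕ)
    (h : (Fin n → D) → (Fin n → D) → D) : Prop :=
  ∀ x : Fin n → D, h x x = 0 → x = 0

/-- A hermitian form is alternating if `h x x ∈ Alt(D,θ)` for all `x`. -/
def HermAlternating {D : Type*} [Ring D] (θ : D → D) (n : ℕ)
    (h : (Fin n → D) → (Fin n → D) → D) : Prop :=
  ∀ x : Fin n → D, h x x ∈ AltSet θ

/-- A hermitian form is direct if `h x x ∉ Alt(D,θ)` for all `x ≠ 0`. -/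
def HermDirect {D : Type*} [Ring D] (θ : D → D) (n : ℕ)
    (h : (Fin n → D) → (Fin n → D) → D) : Prop :=
  ∀ x : Fin n → D, x ≠ 0 → h x x ∉ AltSet θ

/-- A hermitian form is nondegenerate if its radical is trivial. -/
def HermNondegenerate {D : Type*} [Ring D] (n : ℕ)
    (h : (Fin n → D) → (Fin n → D) → D) : Prop :=
  ∀ x : Fin n → D, (∀ y : Fin n → D, h x y = 0) → x = 0

/-- The diagonal hermitian form `⟨a₁,…,aₙ⟩ʰ` over `(D,θ)`. -/
def diagHerm {D : Type*} [Ring D] (θ : D → D) {n : ℕ} (a : Fin n → D) :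
    (Fin n → D) → (Fin n → D) → D :=
  fun x y => ∑ i, θ (x i) * a i * y i

/-- `q` (a representative function of a map `Dⁿ → D/Alt(D,θ)`) is a generalised quadratic form
over `(D,θ)` with polar form `h`: all defining identities are required modulo `Alt(D,θ)`. -/
def IsQuadForm {D : Type*} [Ring D] (θ : D → D) (n : ℕ)
    (q : (Fin n → D) → D) (h : (Fin n → D) → (Fin n → D) → D) : Prop :=
  IsHermForm θ n h ∧
  (∀ (x : Fin n → D) (d : D), q (rsmul x d) - θ d * q x * d ∈ AltSet θ) ∧
  (∀ x y : Fin n → D, q (x + y) - q x - q y - h x y ∈ AltSet θ)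

/-- A quadratic form over `(D,θ)` is isotropic if it vanishes modulo `Alt(D,θ)` at some
nonzero vector. -/
def QuadIsotropic {D : Type*} [Ring D] (θ : D → D) (n : ℕ)
    (q : (Fin n → D) → D) : Prop :=
  ∃ x : Fin n → D, x ≠ 0 ∧ q x ∈ AltSet θ

/-- A quadratic form over `(D,θ)` is anisotropic if it is not isotropic. -/
def QuadAnisotropic {D : Type*} [Ring D] (θ : D → D) (n : ℕ)
    (q : (Fin n → D) → D) : Prop :=
  ∀ x : Fin n → D, x ≠ 0 → q x ∉ AltSet θ

/-- A quadratic form over `(D,θ)` represents `a ∈ D` if its value at some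
nonzero vector is `a + Alt(D,θ)`. -/
def QuadRepresents {D : Type*} [Ring D] (θ : D → D) (n : ℕ)
    (q : (Fin n → D) → D) (a : D) : Prop :=
  ∃ x : Fin n → D, x ≠ 0 ∧ q x - a ∈ AltSet θ

/-- A quadratic form over `(D,θ)` is totally singular if its polar form is identically zero. -/
def QuadTotallySingular {D : Type*} [Ring D] (θ : D → D) (n : ℕ)
    (q : (Fin n → D) → D) : Prop :=
  IsQuadForm θ n q (fun _ _ => 0)

/-- A quadratic form over `(D,θ)` is nonsingular if its polar form is nondegenerate. -/
def QuadNonsingular {D : Type*} [Ring D] (θ : D → D) (n : ℕ)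
    (q : (Fin n → D) → D) : Prop :=
  ∃ h, IsQuadForm θ n q h ∧ HermNondegenerate n h

/-- The diagonal quadratic form `⟨a₁,…,aₙ⟩` over `(D,θ)`. -/
def diagQuad {D : Type*} [Ring D] (θ : D → D) {n : ℕ} (a : Fin n → D) :
    (Fin n → D) → D :=
  fun x => ∑ i, θ (x i) * a i * x i

/-- `u⁺(D)`: the supremum of the dimensions of anisotropic hermitian forms over `(D,θ)`. -/
def uHermPlus {D : Type*} [DivisionRing D] (θ : D → D) : ℕ∞ :=
  ⨆ n ∈ {n : ℕ | ∃ h, IsHermForm θ n h ∧ HermAnisotropic n h}, (n : ℕ∞)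

/-- `u⁺_d(D)`: the supremum of the dimensions of direct hermitian forms over `(D,θ)`. -/
def uHermPlusDirect {D : Type*} [DivisionRing D] (θ : D → D) : ℕ∞ :=
  ⨆ n ∈ {n : ℕ | ∃ h, IsHermForm θ n h ∧ HermDirect θ n h}, (n : ℕ∞)

/-- `u⁻(D)`: the supremum of the dimensions of anisotropic alternating hermitian forms
over `(D,θ)`. -/
def uHermMinus {D : Type*} [DivisionRing D] (θ : D → D) : ℕ∞ :=
  ⨆ n ∈ {n : ℕ | ∃ h, IsHermForm θ n h ∧ HermAnisotropic n h ∧ HermAlternating θ n h},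
    (n : ℕ∞)

/-- `u(D)`: the supremum of the dimensions of anisotropic (generalised) quadratic forms
over `(D,θ)`. -/
def uQuad {D : Type*} [DivisionRing D] (θ : D → D) : ℕ∞ :=
  ⨆ n ∈ {n : ℕ | ∃ q h, IsQuadForm θ n q h ∧ QuadAnisotropic θ n q}, (n : ℕ∞)

/-- `ũ(D)`: the supremum of the dimensions of anisotropic nonsingular quadratic forms
over `(D,θ)`. -/
def uQuadTilde {D : Type*} [DivisionRing D] (θ : D → D) : ℕ∞ :=
  ⨆ n ∈ {n : ℕ | ∃ q, QuadNonsingular θ n q ∧ QuadAnisotropic θ n q}, (n : ℕ∞)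

/-- The polar form of a quadratic form over a field. -/
def polarF {F : Type*} [Field F] {n : ℕ} (q : (Fin n → F) → F) :
    (Fin n → F) → (Fin n → F) → F :=
  fun x y => q (x + y) - q x - q y

/-- A quadratic form over the field `F` (on `Fⁿ`): `q (a • x) = a² q x` and the polar
form is bilinear. -/
def IsQuadFormField {F : Type*} [Field F] (n : ℕ) (q : (Fin n → F) → F) : Prop :=
  (∀ (a : F) (x : Fin n → F), q (a • x) = a ^ 2 * q x) ∧
  (∀ x x' y : Fin n → F, polarF q (x + x') y = polarF q x y + polarF q x' y) ∧
  (∀ (a : F) (x y : Fin n → F), polarF q (a • x) y = a * polarF q x y)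

def QFieldNonsingular {F : Type*} [Field F] (n : ℕ) (q : (Fin n → F) → F) : Prop :=
  ∀ x : Fin n → F, (∀ y : Fin n → F, polarF q x y = 0) → x = 0

def QFieldTotallySingular {F : Type*} [Field F] (n : ℕ) (q : (Fin n → F) → F) : Prop :=
  ∀ x y : Fin n → F, q (x + y) = q x + q y

def QFieldAnisotropic {F : Type*} [Field F] (n : ℕ) (q : (Fin n → F) → F) : Prop :=
  ∀ x : Fin n → F, q x = 0 → x = 0

/-- `ũ(F)`: the supremum of the dimensions of anisotropic nonsingular quadratic forms
over the field `F`. -/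
def uTildeField (F : Type*) [Field F] : ℕ∞ :=
  ⨆ n ∈ {n : ℕ | ∃ q : (Fin n → F) → F,
      IsQuadFormField n q ∧ QFieldNonsingular n q ∧ QFieldAnisotropic n q}, (n : ℕ∞)

/-- The subfield `F² = {a² : a ∈ F}` of a field of characteristic `2`. -/
def sqSubfield (F : Type*) [Field F] [CharP F 2] : Subfield F :=
  (frobenius F 2).fieldRange

/-- `[F : F²]` as an element of `ℕ ∪ {∞}`. -/
def sqIndex (F : Type*) [Field F] [CharP F 2] : ℕ∞ :=
  Cardinal.toENat (Module.rank (sqSubfield F) F)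

/-- `℘(F) = {a² + a : a ∈ F}`. -/
def wpSet (F : Type*) [Field F] : Set F := {a | ∃ b : F, a = b ^ 2 + b}


section Stmt7Aux
set_option linter.unusedSectionVars false

open Module LinearMap Finset

variable {F D : Type*} [Field F] [CharP F 2] [DivisionRing D] [Algebra F D]

private lemma aux_two_eq_zero : (2 : F) = 0 := by
  have := CharP.cast_eq_zero F 2
  exact_mod_cast this

private lemma aux_add_self (F : Type*) [Field F] [CharP F 2] {M : Type*} [AddCommGroup M]
    [Module F M] (x : M) : x + x = 0 := by
  have h : (2 : F) • x = 0 := by rw [aux_two_eq_zero, zero_smul]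
  rwa [two_smul] at h

private lemma aux_eq_of_add_eq_zero (F : Type*) [Field F] [CharP F 2] {M : Type*}
    [AddCommGroup M] [Module F M] {x y : M} (h : x + y = 0) : x = y := by
  have hy := aux_add_self F y
  have : x + y = y + y := by rw [h, hy]
  exact add_right_cancel this

open scoped Classical in
/-- Jacobson-style independence lemma: in a central division algebra, if
`∑ i, c i * x * a i = 0` for all `x` with `(a i)` linearly independent, then all `c i = 0`. -/
private lemma aux_jacobson [Algebra.IsCentral F D] {ι : Type*} [Fintype ι] [DecidableEq ι]
    {a : ι → D} (ha : LinearIndependent F a) :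
    ∀ (n : ℕ) (c : ι → D), ((univ : Finset ι).filter fun i => c i ≠ 0).card ≤ n →
      (∀ x : D, ∑ i, c i * x * a i = 0) → ∀ i, c i = 0 := by
  intro n
  induction n with
  | zero =>
    intro c hc hrel i
    by_contra hne
    have hmem : i ∈ (univ : Finset ι).filter fun i => c i ≠ 0 := by simp [hne]
    have := Finset.card_pos.mpr ⟨i, hmem⟩
    omega
  | succ n ih =>
    intro c hc hrel
    by_contra hnot
    push_neg at hnot
    obtain ⟨i₀, hi₀⟩ := hnot
    have hmem : i₀ ∈ (univ : Finset ι).filter fun i => c i ≠ 0 := by simp [hi₀]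
    set c' : ι → D := fun i => (c i₀)⁻¹ * c i with hc'def
    have hci₀ : c' i₀ = 1 := by
      simp only [hc'def]
      exact inv_mul_cancel₀ hi₀
    have hrel' : ∀ x : D, ∑ i, c' i * x * a i = 0 := by
      intro x
      have h0 : (c i₀)⁻¹ * ∑ i, c i * x * a i = 0 := by rw [hrel x, mul_zero]
      rw [Finset.mul_sum] at h0
      simpa only [hc'def, mul_assoc] using h0
    have hcomm : ∀ (y : D) (i : ι), y * c' i - c' i * y = 0 := by
      intro y
      have hrel2 : ∀ x : D, ∑ i, (y * c' i - c' i * y) * x * a i = 0 := by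
        intro x
        have h1 := hrel' x
        have h2 := hrel' (y * x)
        have hcalc : ∑ i, (y * c' i - c' i * y) * x * a i
            = y * (∑ i, c' i * x * a i) - ∑ i, c' i * (y * x) * a i := by
          rw [Finset.mul_sum, ← Finset.sum_sub_distrib]
          refine Finset.sum_congr rfl fun i _ => by noncomm_ring
        rw [h1, h2, mul_zero, sub_zero] at hcalc
        exact hcalc
      refine ih _ ?_ hrel2
      have hsub : ((univ : Finset ι).filter fun i => (y * c' i - c' i * y) ≠ 0)
          ⊆ ((univ : Finset ι).filter fun i => c i ≠ 0).erase i₀ := by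
        intro i hi
        simp only [Finset.mem_filter, Finset.mem_univ, true_and] at hi
        have hne : c i ≠ 0 := by
          intro h0
          apply hi
          simp [hc'def, h0]
        have hii₀ : i ≠ i₀ := by
          intro h
          subst h
          rw [hci₀, mul_one, one_mul, sub_self] at hi
          exact hi rfl
        exact Finset.mem_erase.mpr ⟨hii₀, by simp [hne]⟩
      calc ((univ : Finset ι).filter fun i => (y * c' i - c' i * y) ≠ 0).card
          ≤ (((univ : Finset ι).filter fun i => c i ≠ 0).erase i₀).card :=
            Finset.card_le_card hsub
        _ = ((univ : Finset ι).filter fun i => c i ≠ 0).card - 1 :=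
            Finset.card_erase_of_mem hmem
        _ ≤ n := by omega
    have hcent : ∀ i, ∃ lam : F, algebraMap F D lam = c' i := by
      intro i
      have hmemc : c' i ∈ Subalgebra.center F D := by
        rw [Subalgebra.mem_center_iff]
        intro b
        have := hcomm b i
        exact sub_eq_zero.mp this
      have hbot : c' i ∈ (⊥ : Subalgebra F D) := Algebra.IsCentral.out hmemc
      rw [Algebra.mem_bot] at hbot
      obtain ⟨lam, hlam⟩ := hbot
      exact ⟨lam, hlam⟩
    choose lam hlam using hcent
    have h1 : ∑ i, lam i • a i = 0 := by
      calc ∑ i, lam i • a i = ∑ i, c' i * 1 * a i := by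
            refine Finset.sum_congr rfl fun i _ => ?_
            rw [mul_one, ← hlam i, Algebra.smul_def]
        _ = 0 := hrel' 1
    have hlam0 := Fintype.linearIndependent_iff.mp ha lam h1
    have hone : (1 : D) = 0 := by
      rw [← hci₀, ← hlam i₀, hlam0 i₀, map_zero]
    exact one_ne_zero hone

set_option maxHeartbeats 4000000 in
/-- Core bound: `dim Sym ≤ dim Alt + deg D`. -/
private lemma aux_key2 [FiniteDimensional F D] [Algebra.IsCentral F D]
    (θ : D → D) (hθ : IsFInvolution F θ) (u : D →ₗ[F] D) (hu : ∀ x, u x = x - θ x)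
    (d : ℕ) (hd : d * d = finrank F D) :
    finrank F (LinearMap.ker u) ≤ finrank F (LinearMap.range u) + d := by
  classical
  set N := finrank F D with hN
  -- bundle θ as a linear map τ
  set τ : D →ₗ[F] D :=
    { toFun := θ
      map_add' := hθ.1
      map_smul' := by
        intro c x
        simp only [RingHom.id_apply]
        exact hθ.2.1 c x } with hτdef
  have τapp : ∀ x, τ x = θ x := fun _ => rfl
  have hu' : ∀ x, u x = x - τ x := hu
  have hττ : ∀ x, τ (τ x) = x := hθ.2.2.2
  have hτmul : ∀ x y, τ (x * y) = τ y * τ x := hθ.2.2.1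
  have huu : ∀ x, u (u x) = 0 := by
    intro x
    have h1 : u (u x) = (x - τ x) - (τ x - x) := by
      rw [hu' (u x), hu' x, map_sub, hττ]
    have h2 : (x - τ x) - (τ x - x) = (x - τ x) + (x - τ x) := by abel
    rw [h1, h2]
    exact aux_add_self F _
  have hrk : LinearMap.range u ≤ LinearMap.ker u := by
    rintro y ⟨x, rfl⟩
    exact LinearMap.mem_ker.mpr (huu x)
  set k := finrank F (LinearMap.ker u) with hkdef
  set r := finrank F (LinearMap.range u) with hrdef
  have hkr : r + k = N := LinearMap.finrank_range_add_finrank_ker u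
  have hrlek : r ≤ k := Submodule.finrank_mono hrk
  -- the basis and the sandwich map Φ
  set a : Basis (Fin N) F D := Module.finBasis F D with hadef
  set Φ : (Fin N × Fin N → F) →ₗ[F] (D →ₗ[F] D) :=
    { toFun := fun c =>
        { toFun := fun x => ∑ p : Fin N × Fin N, c p • (τ (a p.1) * x * a p.2)
          map_add' := by
            intro x y
            rw [← Finset.sum_add_distrib]
            refine Finset.sum_congr rfl fun p _ => ?_
            rw [mul_add, add_mul, smul_add]
          map_smul' := by
            intro t x
            simp only [RingHom.id_apply]
            rw [Finset.smul_sum]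
            refine Finset.sum_congr rfl fun p _ => ?_
            rw [Algebra.mul_smul_comm, Algebra.smul_mul_assoc, smul_comm (c p) t] }
      map_add' := by
        intro c1 c2
        ext x
        simp only [LinearMap.coe_mk, AddHom.coe_mk, LinearMap.add_apply]
        rw [← Finset.sum_add_distrib]
        exact Finset.sum_congr rfl fun p _ => by rw [Pi.add_apply, add_smul]
      map_smul' := by
        intro t c
        ext x
        simp only [LinearMap.coe_mk, AddHom.coe_mk, RingHom.id_apply, LinearMap.smul_apply]
        rw [Finset.smul_sum]
        exact Finset.sum_congr rfl fun p _ => by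
          rw [Pi.smul_apply, smul_eq_mul, mul_smul] } with hΦdef
  have hΦapp : ∀ (c : Fin N × Fin N → F) (x : D),
      Φ c x = ∑ p : Fin N × Fin N, c p • (τ (a p.1) * x * a p.2) := fun _ _ => rfl
  -- injectivity of Φ
  have hΦker : ∀ c, Φ c = 0 → c = 0 := by
    intro c hc
    have hrelx : ∀ x : D, ∑ j, (∑ i, c (i, j) • τ (a i)) * x * a j = 0 := by
      intro x
      have h0 : ∑ p : Fin N × Fin N, c p • (τ (a p.1) * x * a p.2) = 0 := by
        rw [← hΦapp c x, hc]; rfl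
      rw [Fintype.sum_prod_type] at h0
      rw [Finset.sum_comm] at h0
      calc ∑ j, (∑ i, c (i, j) • τ (a i)) * x * a j
          = ∑ j, ∑ i, c (i, j) • (τ (a i) * x * a j) := by
            refine Finset.sum_congr rfl fun j _ => ?_
            rw [Finset.sum_mul, Finset.sum_mul]
            refine Finset.sum_congr rfl fun i _ => ?_
            rw [smul_mul_assoc, smul_mul_assoc]
        _ = 0 := h0
    have hE : ∀ j, (∑ i, c (i, j) • τ (a i)) = 0 := by
      refine aux_jacobson a.linearIndependent (Fintype.card (Fin N))
        (fun j => ∑ i, c (i, j) • τ (a i)) ?_ hrelx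
      calc _ ≤ (univ : Finset (Fin N)).card := Finset.card_filter_le _ _
        _ = Fintype.card (Fin N) := rfl
    funext p
    have hτE : ∑ i, c (i, p.2) • a i = 0 := by
      have := congrArg τ (hE p.2)
      rw [map_sum, map_zero] at this
      calc ∑ i, c (i, p.2) • a i = ∑ i, c (i, p.2) • τ (τ (a i)) := by
            refine Finset.sum_congr rfl fun i _ => by rw [hττ]
        _ = ∑ i, τ (c (i, p.2) • τ (a i)) := by
            refine Finset.sum_congr rfl fun i _ => by rw [map_smul]
        _ = 0 := this
    have := Fintype.linearIndependent_iff.mp a.linearIndependent (fun i => c (i, p.2)) hτE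
    have hp : c (p.1, p.2) = 0 := this p.1
    simpa using hp
  have hΦinj : Function.Injective Φ := by
    rw [← LinearMap.ker_eq_bot]
    exact LinearMap.ker_eq_bot'.mpr hΦker
  have hdim1 : finrank F (Fin N × Fin N → F) = finrank F (D →ₗ[F] D) := by
    rw [Module.finrank_fintype_fun_eq_card, Fintype.card_prod, Fintype.card_fin,
      Module.finrank_linearMap, ← hN]
  have hΦsurj := (LinearMap.injective_iff_surjective_of_finrank_eq_finrank hdim1).mp hΦinj
  set Φe : (Fin N × Fin N → F) ≃ₗ[F] (D →ₗ[F] D) :=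
    LinearEquiv.ofBijective Φ ⟨hΦinj, hΦsurj⟩ with hΦedef
  have hΦe : ∀ c, Φe c = Φ c := fun _ => rfl
  -- conjugation identity
  have hconj : ∀ (c : Fin N × Fin N → F) (x : D),
      τ (Φ c (τ x)) = Φ (fun p => c p.swap) x := by
    intro c x
    rw [hΦapp, hΦapp, map_sum]
    rw [show (∑ p : Fin N × Fin N, τ (c p • (τ (a p.1) * τ x * a p.2)))
        = ∑ p : Fin N × Fin N, c p • (τ (a p.2) * x * a p.1) from
      Finset.sum_congr rfl fun p _ => by
        rw [map_smul, hτmul, hτmul, hττ, hττ, mul_assoc]]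
    refine Fintype.sum_equiv (Equiv.prodComm (Fin N) (Fin N)) _ _ fun p => rfl
  -- the commutator-with-u map T
  set T : (D →ₗ[F] D) →ₗ[F] (D →ₗ[F] D) :=
    { toFun := fun f => f ∘ₗ u + u ∘ₗ f
      map_add' := by
        intro f g
        simp only [LinearMap.add_comp, LinearMap.comp_add]
        abel
      map_smul' := by
        intro t f
        simp only [RingHom.id_apply, LinearMap.smul_comp, LinearMap.comp_smul, smul_add] } with hTdef
  have hTapp : ∀ (f : D →ₗ[F] D) (x : D), T f x = f (u x) + u (f x) := fun _ _ => rfl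
  set kT := finrank F (LinearMap.ker T) with hkTdef
  set tT := finrank F (LinearMap.range T) with htTdef
  have hTrn : tT + kT = N * N := by
    have h := LinearMap.finrank_range_add_finrank_ker T
    rwa [Module.finrank_linearMap, ← hN] at h
  -- elements of ker T commute with τ
  have hker_comm : ∀ f : D →ₗ[F] D, f ∈ LinearMap.ker T → ∀ x, f (τ x) = τ (f x) := by
    intro f hf x
    have h0 : f (u x) + u (f x) = 0 := by
      have h := LinearMap.mem_ker.mp hf
      have := congrArg (fun (g : D →ₗ[F] D) => g x) h
      simpa [hTapp] using this
    have h1 : f (u x) = u (f x) := aux_eq_of_add_eq_zero F h0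
    have h2 : f x - f (τ x) = f x - τ (f x) := by
      calc f x - f (τ x) = f (x - τ x) := (map_sub f x (τ x)).symm
        _ = f (u x) := by rw [← hu' x]
        _ = u (f x) := h1
        _ = f x - τ (f x) := hu' (f x)
    exact sub_right_injective h2
  -- upper bound: 2 * kT ≤ N * N + N
  have hkT2 : 2 * kT ≤ N * N + N := by
    set Ψ : (LinearMap.ker T) →ₗ[F] (Sym2 (Fin N) → F) :=
      { toFun := fun f => fun s => Φe.symm f.1 (Quot.out s)
        map_add' := by
          intro f g
          funext s
          simp only [Submodule.coe_add, map_add, Pi.add_apply]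
        map_smul' := by
          intro t f
          funext s
          simp only [SetLike.val_smul, map_smul, Pi.smul_apply, RingHom.id_apply] } with hΨdef
    have hΨinj : Function.Injective Ψ := by
      rw [← LinearMap.ker_eq_bot (M := LinearMap.ker T)]
      refine LinearMap.ker_eq_bot'.mpr ?_
      intro f hf
      set cc : Fin N × Fin N → F := Φe.symm f.1 with hccdef
      have hccval : ∀ s : Sym2 (Fin N), cc (Quot.out s) = 0 := by
        intro s
        have := congrFun hf s
        simpa [hΨdef] using this
      have hfix : Φe (fun p => cc p.swap) = f.1 := by
        rw [hΦe]
        ext x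
        have h1 : Φ (fun p => cc p.swap) x = τ (Φ cc (τ x)) := (hconj cc x).symm
        have h2 : Φ cc = f.1 := by
          have := Φe.apply_symm_apply f.1
          rwa [hΦe] at this
        rw [h1, h2, ← hker_comm f.1 f.2 (τ x), hττ]
      have hsym : ∀ p : Fin N × Fin N, cc p.swap = cc p := by
        intro p
        have : (fun p : Fin N × Fin N => cc p.swap) = cc := by
          apply Φe.injective
          rw [hfix]
          exact (Φe.apply_symm_apply f.1).symm ▸ rfl
        exact congrFun this p
      have hcc0 : cc = 0 := by
        funext p
        have hout : Sym2.mk (Quot.out (Sym2.mk p.1 p.2)).1 (Quot.out (Sym2.mk p.1 p.2)).2 = Sym2.mk p.1 p.2 := Quot.out_eq _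
        rcases Sym2.mk_eq_mk_iff.mp hout with h | h
        · rw [← h]; exact hccval (Sym2.mk p.1 p.2)
        · have : cc (Quot.out (Sym2.mk p.1 p.2)) = cc p.swap := by rw [h]
          rw [← hsym p, ← this]
          exact hccval (Sym2.mk p.1 p.2)
      have : f.1 = 0 := by
        have := congrArg Φe hcc0
        rw [Φe.apply_symm_apply, map_zero] at this
        exact this
      exact Subtype.ext this
    have hk1 : kT ≤ Fintype.card (Sym2 (Fin N)) := by
      have h := LinearMap.finrank_le_finrank_of_injective hΨinj
      rwa [Module.finrank_fintype_fun_eq_card] at h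
    have hcard : Fintype.card (Sym2 (Fin N)) = (N + 1) * N / 2 := by
      rw [Sym2.card, Fintype.card_fin, Nat.choose_two_right, Nat.add_sub_cancel]
    obtain ⟨w, hw⟩ := Nat.even_mul_succ_self N
    rw [hcard] at hk1
    have hNN : (N + 1) * N = w + w := by rw [← hw]; ring
    have hk2 : kT ≤ w := by omega
    have hNN2 : N * N + N = w + w := by rw [← hw]; ring
    omega
  -- lower bound on the rank of T : tT ≤ k * r + r * k
  obtain ⟨C, hC⟩ := Submodule.exists_isCompl (LinearMap.ker u)
  have hCrank : k + finrank F C = N := by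
    have h := Submodule.finrank_sup_add_finrank_inf_eq (LinearMap.ker u) C
    rw [hC.sup_eq_top, hC.inf_eq_bot, finrank_top, finrank_bot] at h
    omega
  have hCr : finrank F C = r := by omega
  set Y : Submodule F (D →ₗ[F] D) :=
    { carrier := {f | (∀ x ∈ LinearMap.ker u, f x ∈ LinearMap.range u) ∧
        ∀ x, f (u x) = u (f x)}
      add_mem' := by
        rintro f g ⟨hf1, hf2⟩ ⟨hg1, hg2⟩
        constructor
        · intro x hx
          exact Submodule.add_mem _ (hf1 x hx) (hg1 x hx)
        · intro x
          simp only [LinearMap.add_apply, map_add, hf2 x, hg2 x]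
      zero_mem' := by
        constructor
        · intro x _
          simp only [LinearMap.zero_apply]
          exact Submodule.zero_mem _
        · intro x
          simp
      smul_mem' := by
        rintro t f ⟨hf1, hf2⟩
        constructor
        · intro x hx
          exact Submodule.smul_mem _ _ (hf1 x hx)
        · intro x
          simp only [LinearMap.smul_apply, map_smul, hf2 x] } with hYdef
  have hTY : LinearMap.range T ≤ Y := by
    rintro g ⟨v, rfl⟩
    constructor
    · intro x hx
      have hx0 : u x = 0 := LinearMap.mem_ker.mp hx
      have : T v x = u (v x) := by rw [hTapp, hx0, map_zero, zero_add]
      rw [this]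
      exact LinearMap.mem_range_self u (v x)
    · intro x
      have h1 : T v (u x) = u (v (u x)) := by
        rw [hTapp, huu, map_zero, zero_add]
      have h2 : u (T v x) = u (v (u x)) := by
        rw [hTapp, map_add, huu (v x), add_zero]
      rw [h1, h2]
  have hmemY : ∀ f : D →ₗ[F] D, f ∈ Y ↔ ((∀ x ∈ LinearMap.ker u, f x ∈ LinearMap.range u) ∧
      ∀ x, f (u x) = u (f x)) := fun f => Iff.rfl
  set pk := Submodule.linearProjOfIsCompl (LinearMap.ker u) C hC with hpkdef
  set pc := Submodule.linearProjOfIsCompl C (LinearMap.ker u) hC.symm with hpcdef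
  have hdecomp : ∀ x : D, ((pk x : D) + (pc x : D)) = x := fun x =>
    Submodule.projection_add_projection_eq_self hC x
  set Ψy : Y →ₗ[F] ((LinearMap.ker u →ₗ[F] LinearMap.range u) × (C →ₗ[F] LinearMap.ker u)) :=
    { toFun := fun f =>
        ((f.1.restrict (((hmemY f.1).mp f.2).1) : LinearMap.ker u →ₗ[F] LinearMap.range u),
          pk ∘ₗ f.1 ∘ₗ C.subtype)
      map_add' := by
        intro f g
        refine Prod.ext ?_ ?_
        · ext x
          simp [LinearMap.restrict_apply]
        · ext x
          simp
      map_smul' := by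
        intro t f
        refine Prod.ext ?_ ?_
        · ext x
          simp [LinearMap.restrict_apply]
        · ext x
          simp } with hΨydef
  have hΨyinj : Function.Injective Ψy := by
    rw [← LinearMap.ker_eq_bot (M := Y)
      (M₂ := (LinearMap.ker u →ₗ[F] LinearMap.range u) × (C →ₗ[F] LinearMap.ker u))]
    refine LinearMap.ker_eq_bot'.mpr ?_
    intro f hf
    have h1 : (f.1.restrict (((hmemY f.1).mp f.2).1) :
        LinearMap.ker u →ₗ[F] LinearMap.range u) = 0 := congrArg Prod.fst hf
    have h2 : pk ∘ₗ f.1 ∘ₗ C.subtype = 0 := congrArg Prod.snd hf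
    have hf1 : ∀ x : D, x ∈ LinearMap.ker u → f.1 x = 0 := by
      intro x hx
      have h3 := DFunLike.congr_fun h1 ⟨x, hx⟩
      have h4 := congrArg Subtype.val h3
      simpa [LinearMap.restrict_apply] using h4
    have hfC : ∀ x : D, x ∈ C → f.1 x = 0 := by
      intro x hx
      have hpk0 : pk (f.1 x) = 0 := by
        have := DFunLike.congr_fun h2 ⟨x, hx⟩
        simpa using this
      have hxC : f.1 x ∈ C := (Submodule.linearProjOfIsCompl_apply_eq_zero_iff hC).mp hpk0
      have hxK : f.1 x ∈ LinearMap.ker u := by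
        rw [LinearMap.mem_ker]
        have hcomm := ((hmemY f.1).mp f.2).2 x
        have hux : u x ∈ LinearMap.ker u := hrk (LinearMap.mem_range_self u x)
        rw [← hcomm]
        exact hf1 _ hux
      have hmem0 : f.1 x ∈ LinearMap.ker u ⊓ C := Submodule.mem_inf.mpr ⟨hxK, hxC⟩
      rw [hC.inf_eq_bot] at hmem0
      exact hmem0
    apply Subtype.ext
    ext x
    have hx := hdecomp x
    have : f.1 x = f.1 (pk x) + f.1 (pc x) := by
      rw [← map_add, hx]
    rw [this, hf1 _ (pk x).2, hfC _ (pc x).2, add_zero]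
    rfl
  have htT : tT ≤ k * r + r * k := by
    have h1 : tT ≤ finrank F Y := Submodule.finrank_mono hTY
    have h2 : finrank F Y ≤ finrank F
        ((LinearMap.ker u →ₗ[F] LinearMap.range u) × (C →ₗ[F] LinearMap.ker u)) :=
      LinearMap.finrank_le_finrank_of_injective hΨyinj
    have h3 : finrank F
        ((LinearMap.ker u →ₗ[F] LinearMap.range u) × (C →ₗ[F] LinearMap.ker u))
        = k * r + r * k := by
      rw [Module.finrank_prod, Module.finrank_linearMap, Module.finrank_linearMap, hCr]
    omega
  -- final arithmetic
  by_contra hcon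
  push_neg at hcon
  have E1 : (2:ℤ) * kT ≤ N * N + N := by exact_mod_cast hkT2
  have E2 : (tT:ℤ) + kT = N * N := by exact_mod_cast hTrn
  have E3 : (tT:ℤ) ≤ k * r + r * k := by exact_mod_cast htT
  have E4 : (r:ℤ) + k = N := by exact_mod_cast hkr
  have E5 : (d:ℤ) * d = N := by exact_mod_cast hd
  have E6 : (r:ℤ) + d + 1 ≤ k := by exact_mod_cast hcon
  nlinarith [sq_nonneg ((k:ℤ) - r - d), sq_nonneg ((k:ℤ) - r)]


private lemma aux_neg_eq (F : Type*) [Field F] [CharP F 2] {M : Type*} [AddCommGroup M]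
    [Module F M] (x : M) : -x = x := neg_eq_of_add_eq_zero_left (aux_add_self F x)

private def sqRingEquiv (F : Type*) [Field F] [CharP F 2] : F ≃+* (sqSubfield F) :=
  RingEquiv.ofBijective
    ((frobenius F 2).codRestrict (sqSubfield F) (fun x => RingHom.mem_fieldRange.mpr ⟨x, rfl⟩))
    ⟨fun a b hab => (frobenius F 2).injective (congrArg Subtype.val hab),
     fun y => by
      obtain ⟨x, hx⟩ := RingHom.mem_fieldRange.mp y.2
      exact ⟨x, Subtype.ext hx⟩⟩

private lemma sqRingEquiv_symm_sq (F : Type*) [Field F] [CharP F 2] (s : sqSubfield F) :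
    ((sqRingEquiv F).symm s) * ((sqRingEquiv F).symm s) = (s : F) := by
  have h := (sqRingEquiv F).apply_symm_apply s
  have h2 := congrArg (Subtype.val) h
  rw [← h2]
  have : ∀ x : F, ((sqRingEquiv F x : sqSubfield F) : F) = x * x := by
    intro x
    show _root_.frobenius F 2 x = x * x
    rw [_root_.frobenius_def]
    ring
  rw [this]

set_option maxHeartbeats 1000000 in
private lemma aux_front [FiniteDimensional F D] [Algebra.IsCentral F D]
    (θ : D → D) (hθ : IsFInvolution F θ) (d : ℕ) (hd : d * d = finrank F D)
    [FiniteDimensional (sqSubfield F) F]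
    (n : ℕ) (h : (Fin n → D) → (Fin n → D) → D)
    (hherm : IsHermForm θ n h) (hdir : HermDirect θ n h) :
    d * n ≤ finrank (sqSubfield F) F := by
  classical
  set K2 := sqSubfield F with hK2
  set m := finrank K2 F with hm
  set N := finrank F D with hN
  -- θ as a linear map and u = id - θ
  set τ : D →ₗ[F] D :=
    { toFun := θ
      map_add' := hθ.1
      map_smul' := by
        intro c x
        simp only [RingHom.id_apply]
        exact hθ.2.1 c x } with hτdef
  set u : D →ₗ[F] D := LinearMap.id - τ with hudef
  have huapp : ∀ x, u x = x - θ x := fun x => rfl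
  have hττ : ∀ x : D, τ (τ x) = x := hθ.2.2.2
  have hθ1 : θ 1 = 1 := by
    have h1 : θ 1 * θ 1 = θ 1 := by rw [← hθ.2.2.1 1 1, one_mul]
    have hne : θ 1 ≠ 0 := by
      intro h0
      have : (1 : D) = 0 := by
        have := hθ.2.2.2 1
        rw [h0] at this
        rw [← this]
        have hz : θ (0 : D) = 0 := by
          have := hθ.1 0 0
          simpa using this
        exact hz
      exact one_ne_zero this
    have := mul_right_cancel₀ hne (h1.trans (one_mul (θ 1)).symm)
    exact this
  have hrk : LinearMap.range u ≤ LinearMap.ker u := by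
    rintro y ⟨x, rfl⟩
    have h1 : u (u x) = (x - τ x) - (τ x - x) := by
      show (u x) - τ (u x) = _
      show (x - τ x) - τ (x - τ x) = _
      rw [map_sub, hττ]
    have h2 : (x - τ x) - (τ x - x) = (x - τ x) + (x - τ x) := by abel
    refine LinearMap.mem_ker.mpr ?_
    rw [h1, h2]
    exact aux_add_self F _
  set Altsub := LinearMap.range u with hAlt
  set Symsub := LinearMap.ker u with hSym
  set π := Altsub.mkQ with hπ
  -- symmetric elements and membership of values
  have hsymmem : ∀ x : Fin n → D, h x x ∈ Symsub := by
    intro x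
    refine LinearMap.mem_ker.mpr ?_
    rw [huapp]
    rw [sub_eq_zero]
    exact hherm.2.2.2 x x
  set S' : Submodule F (D ⧸ Altsub) := Symsub.map π with hS'
  -- dimension of S' over F is at most d
  have hS'le : finrank F S' ≤ d := by
    have hkey := aux_key2 θ hθ u huapp d hd
    set φ : Symsub →ₗ[F] (D ⧸ Altsub) := π ∘ₗ Symsub.subtype with hφ
    have hrange : LinearMap.range φ = S' := by
      rw [hφ, LinearMap.range_comp, Submodule.range_subtype]
    have hker : LinearMap.ker φ = Submodule.comap Symsub.subtype Altsub := by
      rw [hφ, LinearMap.ker_comp, Submodule.ker_mkQ]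
    have hkerrank : finrank F (LinearMap.ker φ) = finrank F Altsub := by
      rw [hker]
      exact LinearEquiv.finrank_eq (Submodule.comapSubtypeEquivOfLe hrk)
    have hrn := LinearMap.finrank_range_add_finrank_ker φ
    rw [hrange, hkerrank] at hrn
    rw [← hSym, ← hAlt] at hkey
    omega
  -- the basis of Dⁿ over F
  set b : Basis ((j : Fin n) × Fin N) F (Fin n → D) :=
    Pi.basis (fun _ : Fin n => Module.finBasis F D) with hb
  -- quadratic-map computations
  have hQzero : π (h 0 0) = 0 := by
    have h00 : h 0 0 + h 0 0 = h 0 0 := by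
      have := hherm.1 0 0 0
      rw [add_zero] at this
      exact this.symm
    have : h 0 0 = 0 := by
      have h2 : h 0 0 + h 0 0 = h 0 0 + 0 := by rw [add_zero]; exact h00
      exact add_left_cancel h2
    rw [this, map_zero]
  have hQadd : ∀ x y : Fin n → D, π (h (x + y) (x + y)) = π (h x x) + π (h y y) := by
    intro x y
    have hexp : h (x + y) (x + y) = (h x x + h y y) + (h x y + h y x) := by
      rw [hherm.1 x y (x + y), hherm.2.1 x x y, hherm.2.1 y x y]
      abel
    have halt : h x y + h y x ∈ Altsub := by
      rw [hherm.2.2.2 x y]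
      refine LinearMap.mem_range.mpr ⟨h x y, ?_⟩
      rw [huapp, sub_eq_add_neg, aux_neg_eq F]
    have h0 : π (h x y + h y x) = 0 := by
      rw [hπ, Submodule.mkQ_apply]
      exact (Submodule.Quotient.mk_eq_zero _).mpr halt
    rw [hexp, map_add, map_add, h0, add_zero]
  have hQsmul : ∀ (c : F) (x : Fin n → D),
      π (h (c • x) (c • x)) = (c * c) • π (h x x) := by
    intro c x
    have hxc : c • x = rsmul x (algebraMap F D c) := by
      funext i
      show c • x i = x i * algebraMap F D c
      rw [Algebra.smul_def, ← Algebra.commutes]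
    have hθt : θ (algebraMap F D c) = algebraMap F D c := by
      rw [Algebra.algebraMap_eq_smul_one]
      rw [hθ.2.1, hθ1]
    have : h (c • x) (c • x) = (c * c) • h x x := by
      rw [hxc, hherm.2.2.1, hθt]
      rw [Algebra.algebraMap_eq_smul_one]
      rw [smul_mul_assoc, smul_mul_assoc, one_mul, mul_smul_comm, mul_one, smul_smul]
    rw [this, map_smul]
  have hQsum : ∀ (t : Finset ((j : Fin n) × Fin N)) (w : ((j : Fin n) × Fin N) → Fin n → D),
      π (h (∑ i ∈ t, w i) (∑ i ∈ t, w i)) = ∑ i ∈ t, π (h (w i) (w i)) := by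
    intro t
    induction t using Finset.induction_on with
    | empty => intro w; simpa using hQzero
    | insert _ _ hnotmem ih =>
      intro w
      rw [Finset.sum_insert hnotmem, Finset.sum_insert hnotmem, hQadd, ih]
  -- the linearly independent family over K2
  set v : ((j : Fin n) × Fin N) → S' := fun i =>
    ⟨π (h (b i) (b i)), Submodule.mem_map_of_mem (hsymmem (b i))⟩ with hv
  have hli : LinearIndependent K2 v := by
    rw [linearIndependent_iff'']
    intro s g hg0 hsum i
    set e := sqRingEquiv F with he
    set cf : ((j : Fin n) × Fin N) → F := fun i => e.symm (g i) with hcf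
    have hM : (0 : D ⧸ Altsub) = π (h (∑ i ∈ s, cf i • b i) (∑ i ∈ s, cf i • b i)) := by
      have hc1 : ((∑ i ∈ s, g i • v i : S') : D ⧸ Altsub) = 0 := by rw [hsum]; rfl
      have hc2 : ((∑ i ∈ s, g i • v i : S') : D ⧸ Altsub)
          = ∑ i ∈ s, ((g i : F) • (v i : D ⧸ Altsub)) := by
        rw [AddSubmonoidClass.coe_finset_sum]
        refine Finset.sum_congr rfl fun i _ => ?_
        rw [Subfield.smul_def]
        rfl
      have hc3 : ∀ i, (g i : F) • (v i : D ⧸ Altsub) = π (h (cf i • b i) (cf i • b i)) := by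
        intro i
        have hsq : cf i * cf i = (g i : F) := sqRingEquiv_symm_sq F (g i)
        rw [hQsmul, hsq]
      rw [← hc1, hc2]
      rw [Finset.sum_congr rfl fun i _ => hc3 i]
      rw [hQsum]
    have hX : (∑ i ∈ s, cf i • b i) = 0 := by
      by_contra hne
      refine hdir _ hne ?_
      have : h (∑ i ∈ s, cf i • b i) (∑ i ∈ s, cf i • b i) ∈ Altsub := by
        rw [hπ, Submodule.mkQ_apply] at hM
        exact (Submodule.Quotient.mk_eq_zero _).mp hM.symm
      obtain ⟨y, hy⟩ := LinearMap.mem_range.mp this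
      exact ⟨y, by rw [← hy, huapp]⟩
    have hcf0 := linearIndependent_iff''.mp b.linearIndependent s cf
      (fun i hi => by show e.symm (g i) = 0; rw [hg0 i hi]; exact map_zero _) hX i
    have : g i = e (cf i) := by rw [hcf]; exact (e.apply_symm_apply (g i)).symm
    rw [this, hcf0, map_zero]
  -- count
  haveI : FiniteDimensional K2 (D ⧸ Altsub) := FiniteDimensional.trans K2 F (D ⧸ Altsub)
  haveI : FiniteDimensional K2 S' := FiniteDimensional.trans K2 F S'
  have hcount := hli.fintype_card_le_finrank
  have hcard : Fintype.card ((j : Fin n) × Fin N) = n * N := by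
    rw [Fintype.card_sigma]
    simp [Finset.sum_const, Fintype.card_fin]
  have htower : finrank K2 S' = m * finrank F S' :=
    (Module.finrank_mul_finrank K2 F S').symm
  have hfinal : n * N ≤ m * d := by
    calc n * N = Fintype.card ((j : Fin n) × Fin N) := hcard.symm
      _ ≤ finrank K2 S' := hcount
      _ = m * finrank F S' := htower
      _ ≤ m * d := Nat.mul_le_mul_left m hS'le
  have hd0 : 0 < d := by
    rcases Nat.eq_zero_or_pos d with h0 | h0
    · exfalso
      have hz : N = 0 := by rw [← hd, h0, Nat.zero_mul]
      have hpos : 0 < N := Module.finrank_pos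
      omega
    · exact h0
  have : (d * n) * d ≤ m * d := by
    calc (d * n) * d = n * (d * d) := by ring
      _ = n * N := by rw [hd]
      _ ≤ m * d := hfinal
  exact Nat.le_of_mul_le_mul_right this hd0

end Stmt7Aux


/-- `u⁺_d(D) ≤ [F:F²]/deg(D)`, i.e. `deg(D) · u⁺_d(D) ≤ [F:F²]`
in `ℕ ∪ {∞}`, where `deg(D)` is the positive square root of `dim_F D`. -/
theorem stmt7 {F D : Type*} [Field F] [CharP F 2] [DivisionRing D] [Algebra F D]
    [FiniteDimensional F D] [Algebra.IsCentral F D]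
    (θ : D → D) (hθ : IsFInvolution F θ)
    (d : ℕ) (hd : d * d = Module.finrank F D) :
    (d : ℕ∞) * uHermPlusDirect θ ≤ sqIndex F := by
  classical
  rcases lt_or_ge (Module.rank (sqSubfield F) F) Cardinal.aleph0 with hfin | hinf
  · haveI : FiniteDimensional (sqSubfield F) F :=
      Module.rank_lt_aleph0_iff.mp hfin
    set m := Module.finrank (sqSubfield F) F with hm
    have hsq : sqIndex F = (m : ℕ∞) := by
      unfold sqIndex
      rw [← Module.finrank_eq_rank (sqSubfield F) F]
      exact_mod_cast Cardinal.toENat_nat m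
    have hd0 : 0 < d := by
      rcases Nat.eq_zero_or_pos d with h0 | h0
      · exfalso
        have hz : d * d = 0 := by rw [h0, Nat.zero_mul]
        have hpos : 0 < Module.finrank F D := Module.finrank_pos
        omega
      · exact h0
    have hbound : ∀ n' ∈ {n : ℕ | ∃ h', IsHermForm θ n h' ∧ HermDirect θ n h'},
        (n' : ℕ∞) ≤ ((m / d : ℕ) : ℕ∞) := by
      rintro n' ⟨h', hherm, hdir⟩
      have h1 : d * n' ≤ m := aux_front θ hθ d hd n' h' hherm hdir
      have h2 : n' ≤ m / d := (Nat.le_div_iff_mul_le hd0).mpr (by rw [Nat.mul_comm]; exact h1)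
      exact_mod_cast h2
    have hsup : uHermPlusDirect θ ≤ ((m / d : ℕ) : ℕ∞) := by
      unfold uHermPlusDirect
      exact iSup₂_le hbound
    rw [hsq]
    calc (d : ℕ∞) * uHermPlusDirect θ
        ≤ (d : ℕ∞) * ((m / d : ℕ) : ℕ∞) := mul_le_mul_right hsup _
      _ = ((d * (m / d) : ℕ) : ℕ∞) := by rw [Nat.cast_mul]
      _ ≤ (m : ℕ∞) := by
          have h3 : d * (m / d) ≤ m := by
            rw [Nat.mul_comm]
            exact Nat.div_mul_le_self m d
          exact_mod_cast h3
  · have hsq : sqIndex F = ⊤ := by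
      unfold sqIndex
      rw [Cardinal.toENat_eq_top]
      exact hinf
    rw [hsq]
    exact le_top


end GenQuadForm
end

section
/- Let F be a field of characteristic 2 and Q an F-quaternion division algebra. Then u⁻(Q) ≤ (1/4)·ũ(F): if there exists an anisotropic alternating hermitian form of dimension n over (Q,γ) (γ the canonical involution), then there exists an anisotropic nonsingular quadratic form of dimension 4n over F. -/
noncomputable section GenQuadForm

open scoped TensorProduct

section Stmt9Aux

private lemma char2_add_self' (F : Type*) {Q : Type*} [Field F] [CharP F 2]
    [DivisionRing Q] [Algebra F Q] (z : Q) : z + z = 0 := by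
  have h2 : (2 : F) = 0 := by
    have := CharP.cast_eq_zero F 2
    exact_mod_cast this
  have : ((2 : F)) • z = z + z := by
    rw [show (2 : F) = 1 + 1 by norm_num, add_smul, one_smul]
  rw [← this, h2, zero_smul]

private lemma char2_neg_eq' (F : Type*) {Q : Type*} [Field F] [CharP F 2]
    [DivisionRing Q] [Algebra F Q] (z : Q) : -z = z :=
  neg_eq_of_add_eq_zero_left (char2_add_self' F z)

private lemma char2_sub_eq_add' (F : Type*) {Q : Type*} [Field F] [CharP F 2]
    [DivisionRing Q] [Algebra F Q] (a b : Q) : a - b = a + b := by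
  rw [sub_eq_add_neg, char2_neg_eq' F b]

private lemma stmt9_core {F Q : Type*} [Field F] [CharP F 2] [DivisionRing Q]
    [Algebra F Q] [Algebra.IsCentral F Q] (hQ4 : Module.finrank F Q = 4)
    (γ : Q → Q) (hγ : IsFInvolution F γ)
    (trd : Q → F) (htrd : ∀ z : Q, z + γ z = algebraMap F Q (trd z)) :
    ∀ (n : ℕ) (h : (Fin n → Q) → (Fin n → Q) → Q), IsHermForm γ n h →
      HermAnisotropic n h → HermAlternating γ n h →
      ∃ q : (Fin (4 * n) → F) → F, IsQuadFormField (4 * n) q ∧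
        QFieldNonsingular (4 * n) q ∧ QFieldAnisotropic (4 * n) q := by
  intro n h hherm hani halt
  obtain ⟨γadd, γsmul, γmul, γinv⟩ := hγ
  obtain ⟨hL, hR, hses, hsym⟩ := hherm
  have inj : Function.Injective (algebraMap F Q) := (algebraMap F Q).injective
  have γ0 : γ 0 = 0 := by
    have h0 := γadd 0 0
    rw [add_zero] at h0
    exact (left_eq_add.mp h0)
  have γ1 : γ 1 = 1 := by
    have h1 : γ 1 = γ 1 * γ 1 := by rw [← γmul 1 1, one_mul]
    have hne : γ 1 ≠ 0 := by
      intro h0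
      exact one_ne_zero (by rw [← γinv 1, h0, γ0] : (1 : Q) = 0)
    exact mul_right_cancel₀ hne (by rw [← h1, one_mul])
  have γalg : ∀ a : F, γ (algebraMap F Q a) = algebraMap F Q a := by
    intro a
    rw [Algebra.algebraMap_eq_smul_one, γsmul, γ1]
  have trd_eq : ∀ z : Q, algebraMap F Q (trd z) = z + γ z := fun z => (htrd z).symm
  have trd_add : ∀ z w : Q, trd (z + w) = trd z + trd w := by
    intro z w
    apply inj
    rw [map_add, trd_eq, trd_eq, trd_eq, γadd]
    abel
  have trd_mulalg : ∀ (a : F) (z : Q),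
      trd (algebraMap F Q a * z) = a * trd z := by
    intro a z
    apply inj
    rw [trd_eq, map_mul, trd_eq, γmul, γalg, mul_add, ← Algebra.commutes a (γ z)]
  have trd_ne : ∃ z : Q, trd z ≠ 0 := by
    by_contra hc
    push_neg at hc
    have hγid : ∀ z : Q, γ z = z := by
      intro z
      have h0 : z + γ z = 0 := by rw [htrd z, hc z, map_zero]
      have h1 : γ z = -z := by rw [eq_neg_iff_add_eq_zero, add_comm]; exact h0
      rw [h1, char2_neg_eq' F]
    have hcomm : ∀ a b : Q, a * b = b * a := by
      intro a b
      rw [← hγid (a * b), γmul, hγid, hγid]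
    have hsurj : Function.Surjective (Algebra.linearMap F Q) := by
      intro z
      have hz : z ∈ Subalgebra.center F Q :=
        Subalgebra.mem_center_iff.mpr (fun b => hcomm b z)
      have hbot : z ∈ (⊥ : Subalgebra F Q) := Algebra.IsCentral.out hz
      rw [Algebra.mem_bot] at hbot
      obtain ⟨a, ha⟩ := hbot
      exact ⟨a, ha⟩
    have hbt : (⊥ : Subalgebra F Q) = ⊤ := by
      rw [eq_top_iff]
      intro z _
      rw [Algebra.mem_bot]
      exact hsurj z
    have : Module.Finite F Q := Module.finite_of_finrank_pos (by omega)
    have hfr : Module.finrank F Q = 1 :=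
      Subalgebra.bot_eq_top_iff_finrank_eq_one.mp hbt
    omega
  obtain ⟨z₀, hz₀⟩ := trd_ne
  -- basis identification of Qⁿ with F^{4n}
  have : Module.Finite F Q := Module.finite_of_finrank_pos (by omega)
  let b4 : Module.Basis (Fin 4) F Q := Module.finBasisOfFinrankEq F Q hQ4
  let B : Module.Basis ((_ : Fin n) × Fin 4) F (Fin n → Q) := Pi.basis fun _ => b4
  let σ : ((_ : Fin n) × Fin 4) ≃ Fin (4 * n) :=
    (Equiv.sigmaEquivProd (Fin n) (Fin 4)).trans
      (finProdFinEquiv.trans (finCongr (Nat.mul_comm n 4)))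
  let e : (Fin (4 * n) → F) ≃ₗ[F] (Fin n → Q) := (B.reindex σ).equivFun.symm
  -- the F-valued function underlying h x x
  have hval : ∀ x : Fin n → Q, ∃ a : F, algebraMap F Q a = h x x := by
    intro x
    obtain ⟨b, hb⟩ := halt x
    exact ⟨trd b, by rw [trd_eq, hb, char2_sub_eq_add' F]⟩
  choose f hf using hval
  -- basic rsmul lemmas
  have rsmul_one : ∀ x : Fin n → Q, rsmul x 1 = x := by
    intro x; funext i; simp [rsmul]
  have smul_eq_rsmul : ∀ (a : F) (x : Fin n → Q),
      a • x = rsmul x (algebraMap F Q a) := by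
    intro a x; funext i
    simp [rsmul, Algebra.smul_def, Algebra.commutes]
  have hmulr : ∀ (x y : Fin n → Q) (d : Q), h x (rsmul y d) = h x y * d := by
    intro x y d
    have hs := hses x y 1 d
    rw [rsmul_one, γ1, one_mul] at hs
    exact hs
  have hslin : ∀ (a : F) (x y : Fin n → Q),
      h (a • x) y = algebraMap F Q a * h x y := by
    intro a x y
    conv_lhs => rw [smul_eq_rsmul, ← rsmul_one y]
    rw [hses, γalg, mul_one]
  have hsm : ∀ (a : F) (x y : Fin n → Q),
      h (a • x) (a • y) = algebraMap F Q (a ^ 2) * h x y := by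
    intro a x y
    rw [smul_eq_rsmul, smul_eq_rsmul, hses, γalg, pow_two, map_mul,
      mul_assoc, mul_assoc, ← Algebra.commutes a (h x y)]
  have polar_eq : ∀ v w : Fin (4 * n) → F,
      polarF (fun v => f (e v)) v w = trd (h (e v) (e w)) := by
    intro v w
    apply inj
    show algebraMap F Q (f (e (v + w)) - f (e v) - f (e w)) = _
    rw [map_sub, map_sub, hf, hf, hf, map_add, trd_eq, hL, hR, hR,
      hsym (e v) (e w)]
    abel
  refine ⟨fun v => f (e v), ⟨?_, ?_, ?_⟩, ?_, ?_⟩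
  · -- q (a • v) = a ^ 2 * q v
    intro a v
    apply inj
    rw [hf, map_smul, hsm, ← hf, ← map_mul]
  · -- additivity of polar form
    intro v v' w
    rw [polar_eq, polar_eq, polar_eq, map_add, hL, trd_add]
  · -- F-linearity of polar form
    intro a v w
    rw [polar_eq, polar_eq, map_smul, hslin, trd_mulalg]
  · -- nonsingular
    intro v hv
    have hx : ∀ y : Fin n → Q, trd (h (e v) y) = 0 := by
      intro y
      have h0 := hv (e.symm y)
      rw [polar_eq, e.apply_symm_apply] at h0
      exact h0
    have hxx : h (e v) (e v) = 0 := by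
      by_contra hz
      have key : h (e v) (rsmul (e v) ((h (e v) (e v))⁻¹ * z₀)) = z₀ := by
        rw [hmulr, ← mul_assoc, mul_inv_cancel₀ hz, one_mul]
      have := hx (rsmul (e v) ((h (e v) (e v))⁻¹ * z₀))
      rw [key] at this
      exact hz₀ this
    have hev : e v = 0 := hani (e v) hxx
    apply e.injective
    rw [hev, map_zero]
  · -- anisotropic
    intro v hv0
    have hv0' : f (e v) = 0 := hv0
    have hxx : h (e v) (e v) = 0 := by rw [← hf, hv0', map_zero]
    have hev : e v = 0 := hani (e v) hxx
    apply e.injective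
    rw [hev, map_zero]

end Stmt9Aux

/-- Let `Q` be an `F`-quaternion division algebra with canonical
involution `γ` (the involution with `x + γ x ∈ F` for all `x`). Every anisotropic
alternating hermitian form of dimension `n` over `(Q,γ)` yields an anisotropic
nonsingular quadratic form of dimension `4n` over `F`; hence `u⁻(Q) ≤ (1/4)·ũ(F)`. -/
theorem stmt9 {F Q : Type*} [Field F] [CharP F 2] [DivisionRing Q] [Algebra F Q]
    [Algebra.IsCentral F Q] (hQ4 : Module.finrank F Q = 4)
    (γ : Q → Q) (hγ : IsFInvolution F γ)
    (trd : Q → F) (htrd : ∀ z : Q, z + γ z = algebraMap F Q (trd z)) :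
    (∀ (n : ℕ) (h : (Fin n → Q) → (Fin n → Q) → Q), IsHermForm γ n h →
      HermAnisotropic n h → HermAlternating γ n h →
      ∃ q : (Fin (4 * n) → F) → F, IsQuadFormField (4 * n) q ∧
        QFieldNonsingular (4 * n) q ∧ QFieldAnisotropic (4 * n) q) ∧
    4 * uHermMinus γ ≤ uTildeField F := by
  have main := stmt9_core hQ4 γ hγ trd htrd
  refine ⟨main, ?_⟩
  set S : Set ℕ :=
    {n : ℕ | ∃ h, IsHermForm γ n h ∧ HermAnisotropic n h ∧ HermAlternating γ n h}
    with hS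
  have claimA : ∀ m ∈ S, ((4 * m : ℕ) : ℕ∞) ≤ uTildeField F := by
    rintro m ⟨h, h1, h2, h3⟩
    obtain ⟨q, hq1, hq2, hq3⟩ := main m h h1 h2 h3
    exact le_iSup₂ (f := fun (n : ℕ) (_ : n ∈ {n : ℕ | ∃ q : (Fin n → F) → F,
      IsQuadFormField n q ∧ QFieldNonsingular n q ∧ QFieldAnisotropic n q}) => (n : ℕ∞))
      (4 * m) ⟨q, hq1, hq2, hq3⟩
  have hXle : uHermMinus γ ≤ uTildeField F := by
    refine iSup₂_le fun m hm => ?_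
    refine le_trans ?_ (claimA m hm)
    exact_mod_cast Nat.cast_le.mpr (by omega : m ≤ 4 * m)
  rcases eq_or_ne (uHermMinus γ) ⊤ with htop | hne
  · rw [htop] at hXle ⊢
    rw [top_le_iff] at hXle
    rw [hXle]
    exact le_top
  · lift uHermMinus γ to ℕ using hne with m hm
    rcases Nat.eq_zero_or_pos m with hm0 | hmpos
    · subst hm0; simp
    · -- the supremum is attained: m ∈ S
      have hlt : ((m - 1 : ℕ) : ℕ∞) < (m : ℕ∞) := by
        exact_mod_cast Nat.sub_lt hmpos one_pos
      rw [hm] at hlt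
      have : ∃ k, ∃ _ : k ∈ S, ((m - 1 : ℕ) : ℕ∞) < (k : ℕ∞) := by
        simpa only [uHermMinus, lt_iSup_iff] using hlt
      obtain ⟨k, hkS, hk⟩ := this
      have hk1 : m - 1 < k := by exact_mod_cast hk
      have hk2 : (k : ℕ∞) ≤ (m : ℕ∞) := by
        rw [hm]
        exact le_iSup₂ (f := fun (n : ℕ) (_ : n ∈ S) => (n : ℕ∞)) k hkS
      have hk2' : k ≤ m := by exact_mod_cast hk2
      have hkm : k = m := by omega
      subst hkm
      have h4 : ((4 * k : ℕ) : ℕ∞) ≤ uTildeField F := claimA k hkS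
      calc (4 : ℕ∞) * (k : ℕ∞) = ((4 * k : ℕ) : ℕ∞) := by push_cast; ring
        _ ≤ uTildeField F := h4

end GenQuadForm
end

section
/- Let F be a Kaplansky field of characteristic 2 (there exists a unique F-quaternion division algebra up to isomorphism). Then every quadratic form over F of type (4,1) — that is, every 5-dimensional quadratic form over F whose nonsingular part has dimension 4 and whose totally singular part has dimension 1 — is isotropic. -/
noncomputable section GenQuadForm

open scoped TensorProduct

/-! ### Auxiliary development for Statement 15.

We construct, for parameters `β γ : F`, the "quaternion algebra"
`Quat15 F β γ = E ⊕ E·j` where `E = F[θ]`, `θ² = θ - β`, `j·u = σ(u)·j`, `j² = γ`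
(`σ` being the conjugation of `E`).  This presentation is valid in any characteristic and
in characteristic 2 it is the quaternion algebra `[β, γ)`. -/

namespace Stmt15Aux

universe v

/-- Elements `x + y·θ + z·j + w·θj`. -/
@[ext]
structure Quat15 (F : Type v) (β γ : F) : Type v where
  x : F
  y : F
  z : F
  w : F

namespace Quat15

variable {F : Type v} [Field F] {β γ : F}

instance : Zero (Quat15 F β γ) := ⟨⟨0, 0, 0, 0⟩⟩
instance : One (Quat15 F β γ) := ⟨⟨1, 0, 0, 0⟩⟩
instance : Add (Quat15 F β γ) :=
  ⟨fun a b => ⟨a.x + b.x, a.y + b.y, a.z + b.z, a.w + b.w⟩⟩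
instance : Neg (Quat15 F β γ) := ⟨fun a => ⟨-a.x, -a.y, -a.z, -a.w⟩⟩
instance : SMul F (Quat15 F β γ) :=
  ⟨fun c a => ⟨c * a.x, c * a.y, c * a.z, c * a.w⟩⟩
instance : Mul (Quat15 F β γ) :=
  ⟨fun a b =>
    ⟨a.x * b.x - β * a.y * b.y + γ * (a.z * b.z + a.z * b.w + β * a.w * b.w),
     a.x * b.y + a.y * b.x + a.y * b.y + γ * (a.w * b.z - a.z * b.w),
     a.x * b.z - β * a.y * b.w + a.z * b.x + a.z * b.y + β * a.w * b.y,
     a.x * b.w + a.y * b.z + a.y * b.w + a.w * b.x - a.z * b.y⟩⟩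

@[simp] lemma zero_x : (0 : Quat15 F β γ).x = 0 := rfl
@[simp] lemma zero_y : (0 : Quat15 F β γ).y = 0 := rfl
@[simp] lemma zero_z : (0 : Quat15 F β γ).z = 0 := rfl
@[simp] lemma zero_w : (0 : Quat15 F β γ).w = 0 := rfl
@[simp] lemma one_x : (1 : Quat15 F β γ).x = 1 := rfl
@[simp] lemma one_y : (1 : Quat15 F β γ).y = 0 := rfl
@[simp] lemma one_z : (1 : Quat15 F β γ).z = 0 := rfl
@[simp] lemma one_w : (1 : Quat15 F β γ).w = 0 := rfl
@[simp] lemma add_x (a b : Quat15 F β γ) : (a + b).x = a.x + b.x := rfl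
@[simp] lemma add_y (a b : Quat15 F β γ) : (a + b).y = a.y + b.y := rfl
@[simp] lemma add_z (a b : Quat15 F β γ) : (a + b).z = a.z + b.z := rfl
@[simp] lemma add_w (a b : Quat15 F β γ) : (a + b).w = a.w + b.w := rfl
@[simp] lemma neg_x (a : Quat15 F β γ) : (-a).x = -a.x := rfl
@[simp] lemma neg_y (a : Quat15 F β γ) : (-a).y = -a.y := rfl
@[simp] lemma neg_z (a : Quat15 F β γ) : (-a).z = -a.z := rfl
@[simp] lemma neg_w (a : Quat15 F β γ) : (-a).w = -a.w := rfl
@[simp] lemma smul_x (c : F) (a : Quat15 F β γ) : (c • a).x = c * a.x := rfl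
@[simp] lemma smul_y (c : F) (a : Quat15 F β γ) : (c • a).y = c * a.y := rfl
@[simp] lemma smul_z (c : F) (a : Quat15 F β γ) : (c • a).z = c * a.z := rfl
@[simp] lemma smul_w (c : F) (a : Quat15 F β γ) : (c • a).w = c * a.w := rfl
@[simp] lemma mul_x (a b : Quat15 F β γ) :
    (a * b).x = a.x * b.x - β * a.y * b.y + γ * (a.z * b.z + a.z * b.w + β * a.w * b.w) := rfl
@[simp] lemma mul_y (a b : Quat15 F β γ) :
    (a * b).y = a.x * b.y + a.y * b.x + a.y * b.y + γ * (a.w * b.z - a.z * b.w) := rfl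
@[simp] lemma mul_z (a b : Quat15 F β γ) :
    (a * b).z = a.x * b.z - β * a.y * b.w + a.z * b.x + a.z * b.y + β * a.w * b.y := rfl
@[simp] lemma mul_w (a b : Quat15 F β γ) :
    (a * b).w = a.x * b.w + a.y * b.z + a.y * b.w + a.w * b.x - a.z * b.y := rfl

instance : AddCommGroup (Quat15 F β γ) where
  add_assoc a b c := by ext <;> simp <;> ring
  zero_add a := by ext <;> simp
  add_zero a := by ext <;> simp
  add_comm a b := by ext <;> simp <;> ring
  neg_add_cancel a := by ext <;> simp
  nsmul := nsmulRec
  zsmul := zsmulRec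

instance instRing : Ring (Quat15 F β γ) where
  __ := (inferInstance : AddCommGroup (Quat15 F β γ))
  mul_assoc a b c := by ext <;> simp <;> ring
  one_mul a := by ext <;> simp
  mul_one a := by ext <;> simp
  left_distrib a b c := by ext <;> simp <;> ring
  right_distrib a b c := by ext <;> simp <;> ring
  zero_mul a := by ext <;> simp
  mul_zero a := by ext <;> simp

instance instModule : Module F (Quat15 F β γ) where
  one_smul a := by ext <;> simp
  mul_smul c d a := by ext <;> simp <;> ring
  smul_zero c := by ext <;> simp
  smul_add c a b := by ext <;> simp <;> ring
  add_smul c d a := by ext <;> simp <;> ring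
  zero_smul a := by ext <;> simp

/-- The structural ring embedding `F →+* Quat15 F β γ`. -/
def coeHom : F →+* Quat15 F β γ where
  toFun c := ⟨c, 0, 0, 0⟩
  map_one' := rfl
  map_mul' a b := by ext <;> simp <;> ring
  map_zero' := rfl
  map_add' a b := by ext <;> simp

instance instAlgebra : Algebra F (Quat15 F β γ) where
  algebraMap := coeHom
  commutes' c a := by ext <;> simp [coeHom] <;> ring
  smul_def' c a := by ext <;> simp [coeHom] <;> ring

@[simp] lemma algebraMap_x (c : F) : (algebraMap F (Quat15 F β γ) c).x = c := rfl
@[simp] lemma algebraMap_y (c : F) : (algebraMap F (Quat15 F β γ) c).y = 0 := rfl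
@[simp] lemma algebraMap_z (c : F) : (algebraMap F (Quat15 F β γ) c).z = 0 := rfl
@[simp] lemma algebraMap_w (c : F) : (algebraMap F (Quat15 F β γ) c).w = 0 := rfl

instance : Nontrivial (Quat15 F β γ) :=
  ⟨⟨1, 0, fun h => one_ne_zero (congrArg Quat15.x h)⟩⟩

/-- The coordinate linear equivalence with `Fin 4 → F`. -/
def equivFun : Quat15 F β γ ≃ₗ[F] (Fin 4 → F) where
  toFun a := ![a.x, a.y, a.z, a.w]
  invFun v := ⟨v 0, v 1, v 2, v 3⟩
  map_add' a b := by
    funext i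
    fin_cases i <;> simp
  map_smul' c a := by
    funext i
    fin_cases i <;> simp
  left_inv a := rfl
  right_inv v := by
    funext i
    fin_cases i <;> rfl

lemma finrank_eq_four : Module.finrank F (Quat15 F β γ) = 4 := by
  rw [(equivFun (F := F) (β := β) (γ := γ)).finrank_eq, Module.finrank_fin_fun]

lemma isCentral (h2 : (2 : F) = 0) : Algebra.IsCentral F (Quat15 F β γ) := by
  constructor
  intro a ha
  rw [Subalgebra.mem_center_iff] at ha
  have hi := ha ⟨0, 1, 0, 0⟩
  have hj := ha ⟨0, 0, 1, 0⟩
  have hiw := congrArg Quat15.w hi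
  have hiz := congrArg Quat15.z hi
  simp at hiw hiz
  -- hiw : a.w + a.z = -a.z , hiz : -(β * a.w) = a.z + β * a.w  (up to simp normal form)
  have hw : a.w = 0 := by linear_combination hiw - a.z * h2
  have hz : a.z = 0 := by linear_combination (-1) * hiz - 2 * β * hw
  have hjz := congrArg Quat15.z hj
  simp only [mul_z, hw, hz] at hjz
  have hy : a.y = 0 := by
    simp at hjz
    linear_combination hjz
  rw [Algebra.mem_bot]
  exact ⟨a.x, by ext <;> simp [hy, hz, hw]⟩

/-- The conjugate `σ(u) - v j` of `u + v j`. -/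
def conj (a : Quat15 F β γ) : Quat15 F β γ := ⟨a.x + a.y, -a.y, -a.z, -a.w⟩

/-- The (reduced) norm. -/
def nrd (a : Quat15 F β γ) : F :=
  a.x ^ 2 + a.x * a.y + β * a.y ^ 2 - γ * (a.z ^ 2 + a.z * a.w + β * a.w ^ 2)

lemma mul_conj (a : Quat15 F β γ) :
    a * conj a = algebraMap F (Quat15 F β γ) (nrd a) := by
  ext <;>
    simp only [mul_x, mul_y, mul_z, mul_w, conj, algebraMap_x, algebraMap_y, algebraMap_z,
      algebraMap_w, nrd] <;>
    ring

lemma conj_mul (a : Quat15 F β γ) :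
    conj a * a = algebraMap F (Quat15 F β γ) (nrd a) := by
  ext <;>
    simp only [mul_x, mul_y, mul_z, mul_w, conj, algebraMap_x, algebraMap_y, algebraMap_z,
      algebraMap_w, nrd] <;>
    ring

/-- If the norm form `⟨1,γ⟩ ⊗ [1,β]` is anisotropic (hypothesis `han`), the reduced norm
of a nonzero element is nonzero. -/
lemma nrd_ne_zero (han : ∀ p q t : F, p ^ 2 + p * q + β * q ^ 2 = γ * t ^ 2 →
      p = 0 ∧ q = 0 ∧ t = 0)
    {a : Quat15 F β γ} (h : a ≠ 0) : nrd a ≠ 0 := by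
  intro h0
  have key : a.x ^ 2 + a.x * a.y + β * a.y ^ 2 = γ * (a.z ^ 2 + a.z * a.w + β * a.w ^ 2) := by
    unfold nrd at h0; linear_combination h0
  by_cases hzw : a.z = 0 ∧ a.w = 0
  · obtain ⟨hz, hw⟩ := hzw
    have := han a.x a.y 0 (by rw [key, hz, hw]; ring)
    exact h (by ext <;> simp [this.1, this.2.1, hz, hw])
  · have hNzw : a.z ^ 2 + a.z * a.w + β * a.w ^ 2 ≠ 0 := by
      intro hN
      have := han a.z a.w 0 (by rw [hN]; ring)
      exact hzw ⟨this.1, this.2.1⟩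
    -- multiplicativity: NE(u)·NE(v) = NE(u·v)
    have hmult : (a.x * a.z - β * a.y * a.w) ^ 2 +
        (a.x * a.z - β * a.y * a.w) * (a.x * a.w + a.y * a.z + a.y * a.w) +
        β * (a.x * a.w + a.y * a.z + a.y * a.w) ^ 2 =
        γ * (a.z ^ 2 + a.z * a.w + β * a.w ^ 2) ^ 2 := by
      have expand : (a.x * a.z - β * a.y * a.w) ^ 2 +
          (a.x * a.z - β * a.y * a.w) * (a.x * a.w + a.y * a.z + a.y * a.w) +
          β * (a.x * a.w + a.y * a.z + a.y * a.w) ^ 2 =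
          (a.x ^ 2 + a.x * a.y + β * a.y ^ 2) * (a.z ^ 2 + a.z * a.w + β * a.w ^ 2) := by
        ring
      rw [expand, key]; ring
    exact hNzw (han _ _ _ hmult).2.2

/-- `Quat15 F β γ` is a division ring when its norm form is anisotropic. -/
@[reducible]
noncomputable def divisionRing
    (han : ∀ p q t : F, p ^ 2 + p * q + β * q ^ 2 = γ * t ^ 2 → p = 0 ∧ q = 0 ∧ t = 0) :
    DivisionRing (Quat15 F β γ) :=
  DivisionRing.ofIsUnitOrEqZero fun a => by
    by_cases h : a = 0
    · exact Or.inr h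
    · left
      have hn := nrd_ne_zero han h
      refine ⟨⟨a, (nrd a)⁻¹ • conj a, ?_, ?_⟩, rfl⟩
      · have : a * ((nrd a)⁻¹ • conj a) = (nrd a)⁻¹ • (a * conj a) := by
          ext <;> simp <;> ring
        rw [this, mul_conj, Algebra.algebraMap_eq_smul_one, smul_smul,
          inv_mul_cancel₀ hn, one_smul]
      · have : ((nrd a)⁻¹ • conj a) * a = (nrd a)⁻¹ • (conj a * a) := by
          ext <;> simp <;> ring
        rw [this, conj_mul, Algebra.algebraMap_eq_smul_one, smul_smul,
          inv_mul_cancel₀ hn, one_smul]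

end Quat15

end Stmt15Aux

/-- Let `F` be a Kaplansky field of characteristic 2 (there is a unique
`F`-quaternion division algebra `Q` up to isomorphism). Then every quadratic form over `F`
of type `(4,1)` — a 5-dimensional form decomposing as the orthogonal sum of a
4-dimensional nonsingular form and a 1-dimensional totally singular form — is isotropic. -/
theorem stmt15 {F : Type u} [Field F] [CharP F 2]
    (Q : Type u) [DivisionRing Q] [Algebra F Q] [Algebra.IsCentral F Q]
    (hQ4 : Module.finrank F Q = 4)
    (huniq : ∀ (Q' : Type u) [DivisionRing Q'] [Algebra F Q'],
      Algebra.IsCentral F Q' → Module.finrank F Q' = 4 → Nonempty (Q' ≃ₐ[F] Q))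
    (q : (Fin 5 → F) → F) (hq : IsQuadFormField 5 q)
    (q₁ : (Fin 4 → F) → F) (q₂ : (Fin 1 → F) → F)
    (hq₁ : IsQuadFormField 4 q₁) (hq₁ns : QFieldNonsingular 4 q₁)
    (hq₂ : IsQuadFormField 1 q₂) (hq₂ts : QFieldTotallySingular 1 q₂)
    (f : (Fin 5 → F) ≃ₗ[F] (Fin 4 → F) × (Fin 1 → F))
    (hdecomp : ∀ x : Fin 5 → F, q x = q₁ (f x).1 + q₂ (f x).2) :
    ∃ x : Fin 5 → F, x ≠ 0 ∧ q x = 0 := by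
  classical
  by_contra hcon
  push_neg at hcon
  have h2 : (2 : F) = 0 := by exact_mod_cast CharP.cast_eq_zero F 2
  obtain ⟨q1s, B1add, B1smul⟩ := hq₁
  have q1zero : q₁ 0 = 0 := by simpa using q1s 0 0
  obtain ⟨q2s, -, -⟩ := hq₂
  have q2zero : q₂ 0 = 0 := by simpa using q2s 0 0
  -- The global anisotropy hypothesis, in split coordinates.
  have P : ∀ (y : Fin 4 → F) (z : Fin 1 → F), q₁ y + q₂ z = 0 → y = 0 ∧ z = 0 := by
    intro y z h
    by_contra hyz
    have hx : f.symm (y, z) ≠ 0 := by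
      intro h0
      apply hyz
      have hz0 : ((y, z) : (Fin 4 → F) × (Fin 1 → F)) = 0 := by
        have := congrArg f h0
        simpa using this
      exact ⟨by simpa using congrArg Prod.fst hz0, by simpa using congrArg Prod.snd hz0⟩
    exact hcon _ hx (by rw [hdecomp, f.apply_symm_apply]; exact h)
  have aniso : ∀ y : Fin 4 → F, q₁ y = 0 → y = 0 := by
    intro y h
    exact (P y 0 (by rw [h, q2zero, add_zero])).1
  -- the 1-dimensional totally singular part
  set c := q₂ (fun _ => 1) with hcdef
  have hc : c ≠ 0 := by
    intro h0
    have h00 := P 0 (fun _ => 1) (by rw [q1zero, zero_add, ← hcdef]; exact h0)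
    have := congrFun h00.2 0
    simp at this
  -- polar form generalities
  have Bsym : ∀ u v, polarF q₁ u v = polarF q₁ v u := by
    intro u v
    simp only [polarF, add_comm u v]
    ring
  have qadd : ∀ u v, q₁ (u + v) = q₁ u + q₁ v + polarF q₁ u v := by
    intro u v
    simp only [polarF]
    ring
  have Badd2 : ∀ u v w, polarF q₁ u (v + w) = polarF q₁ u v + polarF q₁ u w := by
    intro u v w
    rw [Bsym, B1add, Bsym v u, Bsym w u]
  have Bsmul2 : ∀ (t : F) (u v), polarF q₁ u (t • v) = t * polarF q₁ u v := by
    intro t u v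
    rw [Bsym, B1smul, Bsym v u]
  have Bzero1 : ∀ v, polarF q₁ 0 v = 0 := by
    intro v
    have := B1smul 0 0 v
    rw [zero_smul] at this
    rw [this, zero_mul]
  have Balt : ∀ u, polarF q₁ u u = 0 := by
    intro u
    have huu : u + u = (2 : F) • u := (two_smul F u).symm
    simp only [polarF, huu, h2, zero_smul, q1zero]
    linear_combination (-(q₁ u)) * h2
  -- construction of a symplectic basis
  obtain ⟨e1, he1⟩ : ∃ v : Fin 4 → F, v ≠ 0 := by
    refine ⟨Pi.single 0 1, fun h => ?_⟩
    have := congrFun h 0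
    simp at this
  have hf0 : ∃ v, polarF q₁ e1 v ≠ 0 := by
    by_contra hall
    push_neg at hall
    exact he1 (hq₁ns e1 hall)
  obtain ⟨f0, hf0⟩ := hf0
  obtain ⟨f1, hBe1f1⟩ : ∃ v, polarF q₁ e1 v = 1 :=
    ⟨(polarF q₁ e1 f0)⁻¹ • f0, by rw [Bsmul2, inv_mul_cancel₀ hf0]⟩
  -- find e2 in the kernel of pairing against e1, f1
  have hS : ∃ e2 : Fin 4 → F, e2 ≠ 0 ∧ polarF q₁ e1 e2 = 0 ∧ polarF q₁ f1 e2 = 0 := by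
    set S : (Fin 4 → F) →ₗ[F] F × F :=
      { toFun := fun v => (polarF q₁ e1 v, polarF q₁ f1 v)
        map_add' := by
          intro u v
          simp only [Badd2]
          rfl
        map_smul' := by
          intro t v
          simp only [Bsmul2]
          rfl } with hSdef
    have hker : LinearMap.ker S ≠ ⊥ := by
      intro hk
      have hinj := LinearMap.ker_eq_bot.mp hk
      have hle := LinearMap.finrank_le_finrank_of_injective hinj
      rw [Module.finrank_fin_fun, Module.finrank_prod, Module.finrank_self] at hle
      omega
    obtain ⟨e2, hmem, hne⟩ := Submodule.exists_mem_ne_zero_of_ne_bot hker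
    rw [LinearMap.mem_ker] at hmem
    refine ⟨e2, hne, ?_, ?_⟩
    · have := congrArg Prod.fst hmem
      simpa [hSdef] using this
    · have := congrArg Prod.snd hmem
      simpa [hSdef] using this
  obtain ⟨e2, he2, hBe1e2, hBf1e2⟩ := hS
  have hg0 : ∃ v, polarF q₁ e2 v ≠ 0 := by
    by_contra hall
    push_neg at hall
    exact he2 (hq₁ns e2 hall)
  obtain ⟨g0, hg0⟩ := hg0
  obtain ⟨f2, hBe2f2, hBe1f2, hBf1f2⟩ :
      ∃ v, polarF q₁ e2 v = 1 ∧ polarF q₁ e1 v = 0 ∧ polarF q₁ f1 v = 0 := by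
    have hBe2f2' : polarF q₁ e2 (g0 + (polarF q₁ f1 g0) • e1 + (polarF q₁ e1 g0) • f1)
        = polarF q₁ e2 g0 := by
      rw [Badd2, Badd2, Bsmul2, Bsmul2, Bsym e2 e1, hBe1e2, Bsym e2 f1, hBf1e2]
      ring
    refine ⟨(polarF q₁ e2 g0)⁻¹ • (g0 + (polarF q₁ f1 g0) • e1 + (polarF q₁ e1 g0) • f1),
      ?_, ?_, ?_⟩
    · rw [Bsmul2, hBe2f2', inv_mul_cancel₀ hg0]
    · rw [Bsmul2, Badd2, Badd2, Bsmul2, Bsmul2, Balt, hBe1f1]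
      have : polarF q₁ e1 g0 + polarF q₁ f1 g0 * 0 + polarF q₁ e1 g0 * 1 = 0 := by
        linear_combination (polarF q₁ e1 g0) * h2
      rw [this, mul_zero]
    · rw [Bsmul2, Badd2, Badd2, Bsmul2, Bsmul2, Balt, Bsym f1 e1, hBe1f1]
      have : polarF q₁ f1 g0 + polarF q₁ f1 g0 * 1 + polarF q₁ e1 g0 * 0 = 0 := by
        linear_combination (polarF q₁ f1 g0) * h2
      rw [this, mul_zero]
  -- reversed pairings
  have hBf1e1 : polarF q₁ f1 e1 = 1 := by rw [Bsym]; exact hBe1f1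
  have hBe2e1 : polarF q₁ e2 e1 = 0 := by rw [Bsym]; exact hBe1e2
  have hBe2f1 : polarF q₁ e2 f1 = 0 := by rw [Bsym]; exact hBf1e2
  have hBf2e1 : polarF q₁ f2 e1 = 0 := by rw [Bsym]; exact hBe1f2
  have hBf2f1 : polarF q₁ f2 f1 = 0 := by rw [Bsym]; exact hBf1f2
  have hBf2e2 : polarF q₁ f2 e2 = 1 := by rw [Bsym]; exact hBe2f2
  -- coefficients
  set aa := q₁ e1 with haadef
  set bb := q₁ f1 with hbbdef
  set aa' := q₁ e2 with haa'def
  set bb' := q₁ f2 with hbb'def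
  have haa : aa ≠ 0 := fun h => he1 (aniso e1 (by rw [← haadef]; exact h))
  have haa' : aa' ≠ 0 := fun h => he2 (aniso e2 (by rw [← haa'def]; exact h))
  -- value of q₁ on the span of the basis
  have val : ∀ x1 x2 x3 x4 : F,
      q₁ (x1 • e1 + x2 • f1 + (x3 • e2 + x4 • f2)) =
        aa * x1 ^ 2 + x1 * x2 + bb * x2 ^ 2 + aa' * x3 ^ 2 + x3 * x4 + bb' * x4 ^ 2 := by
    intro x1 x2 x3 x4
    simp only [qadd, q1s, B1add, B1smul, Badd2, Bsmul2, Balt, hBe1f1, hBe2f2, hBe1e2,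
      hBf1e2, hBe1f2, hBf1f2, hBf1e1, hBe2e1, hBe2f1, hBf2e1, hBf2f1, hBf2e2,
      ← haadef, ← hbbdef, ← haa'def, ← hbb'def]
    ring
  -- linear independence of the basis via the pairings
  have Bexp : ∀ (x1 x2 x3 x4 : F) (v : Fin 4 → F),
      polarF q₁ (x1 • e1 + x2 • f1 + (x3 • e2 + x4 • f2)) v =
        x1 * polarF q₁ e1 v + x2 * polarF q₁ f1 v +
          (x3 * polarF q₁ e2 v + x4 * polarF q₁ f2 v) := by
    intro x1 x2 x3 x4 v
    simp only [B1add, B1smul]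
  have indep : ∀ x1 x2 x3 x4 : F,
      x1 • e1 + x2 • f1 + (x3 • e2 + x4 • f2) = 0 →
        x1 = 0 ∧ x2 = 0 ∧ x3 = 0 ∧ x4 = 0 := by
    intro x1 x2 x3 x4 h
    have key : ∀ v : Fin 4 → F,
        x1 * polarF q₁ e1 v + x2 * polarF q₁ f1 v +
          (x3 * polarF q₁ e2 v + x4 * polarF q₁ f2 v) = 0 := by
      intro v
      rw [← Bexp, h, Bzero1]
    have k1 := key f1
    rw [hBe1f1, Balt, hBe2f1, hBf2f1] at k1
    have k2 := key e1
    rw [Balt, hBf1e1, hBe2e1, hBf2e1] at k2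
    have k3 := key f2
    rw [hBe1f2, hBf1f2, hBe2f2, Balt] at k3
    have k4 := key e2
    rw [hBe1e2, hBf1e2, Balt, hBf2e2] at k4
    refine ⟨by linear_combination k1, by linear_combination k2,
      by linear_combination k3, by linear_combination k4⟩
  -- anisotropy in coordinates
  have Pc : ∀ x1 x2 x3 x4 t : F,
      aa * x1 ^ 2 + x1 * x2 + bb * x2 ^ 2 + aa' * x3 ^ 2 + x3 * x4 + bb' * x4 ^ 2
          + c * t ^ 2 = 0 →
        x1 = 0 ∧ x2 = 0 ∧ x3 = 0 ∧ x4 = 0 ∧ t = 0 := by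
    intro x1 x2 x3 x4 t h
    have hq2t : q₂ (t • (fun _ => 1 : Fin 1 → F)) = t ^ 2 * c := by
      rw [q2s, ← hcdef]
    have hP := P (x1 • e1 + x2 • f1 + (x3 • e2 + x4 • f2)) (t • (fun _ => 1 : Fin 1 → F))
      (by rw [val, hq2t]; linear_combination h)
    have ht : t = 0 := by
      have := congrFun hP.2 0
      simpa using this
    obtain ⟨hx1, hx2, hx3, hx4⟩ := indep _ _ _ _ hP.1
    exact ⟨hx1, hx2, hx3, hx4, ht⟩
  -- anisotropy of the two quaternion norm forms
  have Hani1 : ∀ p qq t : F,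
      p ^ 2 + p * qq + (aa * bb) * qq ^ 2 = (c * aa) * t ^ 2 →
        p = 0 ∧ qq = 0 ∧ t = 0 := by
    intro p qq t h
    have hval : aa * (p * aa⁻¹) ^ 2 + (p * aa⁻¹) * qq + bb * qq ^ 2 + aa' * 0 ^ 2
        + 0 * 0 + bb' * 0 ^ 2 + c * t ^ 2 = 0 := by
      have hinv : aa * aa⁻¹ = 1 := mul_inv_cancel₀ haa
      linear_combination aa⁻¹ * h + c * t ^ 2 * h2 +
        (aa⁻¹ * p ^ 2 - bb * qq ^ 2 + c * t ^ 2) * hinv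
    obtain ⟨hp, hqq, -, -, ht⟩ := Pc _ _ _ _ _ hval
    have : p = 0 := by
      have := mul_eq_zero.mp hp
      rcases this with h' | h'
      · exact h'
      · exact absurd h' (inv_ne_zero haa)
    exact ⟨this, hqq, ht⟩
  have Hani2 : ∀ p qq t : F,
      p ^ 2 + p * qq + (aa' * bb') * qq ^ 2 = (c * aa') * t ^ 2 →
        p = 0 ∧ qq = 0 ∧ t = 0 := by
    intro p qq t h
    have hval : aa * 0 ^ 2 + 0 * 0 + bb * 0 ^ 2 + aa' * (p * aa'⁻¹) ^ 2
        + (p * aa'⁻¹) * qq + bb' * qq ^ 2 + c * t ^ 2 = 0 := by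
      have hinv : aa' * aa'⁻¹ = 1 := mul_inv_cancel₀ haa'
      linear_combination aa'⁻¹ * h + c * t ^ 2 * h2 +
        (aa'⁻¹ * p ^ 2 - bb' * qq ^ 2 + c * t ^ 2) * hinv
    obtain ⟨-, -, hp, hqq, ht⟩ := Pc _ _ _ _ _ hval
    have : p = 0 := by
      have := mul_eq_zero.mp hp
      rcases this with h' | h'
      · exact h'
      · exact absurd h' (inv_ne_zero haa')
    exact ⟨this, hqq, ht⟩
  -- the two quaternion algebras
  letI dA : DivisionRing (Stmt15Aux.Quat15 F (aa * bb) (c * aa)) :=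
    Stmt15Aux.Quat15.divisionRing Hani1
  letI dA' : DivisionRing (Stmt15Aux.Quat15 F (aa' * bb') (c * aa')) :=
    Stmt15Aux.Quat15.divisionRing Hani2
  obtain ⟨ψ₁⟩ := huniq (Stmt15Aux.Quat15 F (aa * bb) (c * aa))
    (Stmt15Aux.Quat15.isCentral h2) Stmt15Aux.Quat15.finrank_eq_four
  obtain ⟨ψ₂⟩ := huniq (Stmt15Aux.Quat15 F (aa' * bb') (c * aa'))
    (Stmt15Aux.Quat15.isCentral h2) Stmt15Aux.Quat15.finrank_eq_four
  let ψ := ψ₁.trans ψ₂.symm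
  let jA : Stmt15Aux.Quat15 F (aa * bb) (c * aa) := ⟨0, 0, 1, 0⟩
  have hjj : jA * jA = algebraMap F (Stmt15Aux.Quat15 F (aa * bb) (c * aa)) (c * aa) := by
    ext <;> simp [jA]
  have hz : ψ jA * ψ jA = algebraMap F (Stmt15Aux.Quat15 F (aa' * bb') (c * aa')) (c * aa) := by
    rw [← map_mul, hjj, AlgEquiv.commutes]
  set z' := ψ jA with hz'def
  have h1c := congrArg Stmt15Aux.Quat15.y hz
  simp only [Stmt15Aux.Quat15.mul_y, Stmt15Aux.Quat15.algebraMap_y] at h1c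
  have hy2 : z'.y * z'.y = 0 := by linear_combination h1c - z'.x * z'.y * h2
  have hy0 : z'.y = 0 := mul_self_eq_zero.mp hy2
  have h0c := congrArg Stmt15Aux.Quat15.x hz
  simp only [Stmt15Aux.Quat15.mul_x, Stmt15Aux.Quat15.algebraMap_x, hy0] at h0c
  -- h0c : z'.x * z'.x + (c * aa') * (z'.z * z'.z + z'.z * z'.w + (aa' * bb') * (z'.w * z'.w))
  --       = c * aa   (the y-terms vanish)
  have hfin := Pc c 0 (c * z'.z) (aa' * c * z'.w) z'.x
    (by linear_combination c * h0c + aa * c ^ 2 * h2)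
  exact hc hfin.1

end GenQuadForm
end
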